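/- Cleaning soundness for full groups: if all remaining tiles of a group g (two or four of them) are simultaneously playable on board B, then B is solvable if and only if the board obtained by removing all tiles of g (by playing them in matches of g) is solvable. -/

import Mathlib

/-- A board is a finite multiset of isolated stacks; each stack is a list of
tile groups, with the head of the list being the top tile of the stack. -/
abbrev Board (G : Type*) := Multiset (List G)

variable {G : Type*} [DecidableEq G]

/-- The number of tiles of group `g` remaining on the board. -/
def tileCount (B : Board G) (g : G) : ℕ := (B.map (fun s => s.count g)).sum

/-- The total number of tiles on the board. -/
def totalTiles (B : Board G) : ℕ := (B.map List.length).sum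

/-- The board obtained by removing the (playable) top tiles of stacks `s₁` and
`s₂`, the remaining stacks being `rest`; emptied stacks disappear. -/
def play (s₁ s₂ : List G) (rest : Board G) : Board G :=
  Multiset.filter (fun s => s ≠ []) (s₁.tail ::ₘ s₂.tail ::ₘ rest)

/-- A legal move: remove two playable (top) tiles of the same group. -/
def Move (B B' : Board G) : Prop :=
  ∃ (g : G) (s₁ s₂ : List G) (rest : Board G),
    B = s₁ ::ₘ s₂ ::ₘ rest ∧ s₁.head? = some g ∧ s₂.head? = some g ∧
    B' = play s₁ s₂ rest

/-- A board is solvable iff some sequence of legal moves empties it. -/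
def Solvable (B : Board G) : Prop := Relation.ReflTransGen Move B 0

/-- All stacks are nonempty and of height at most two. -/
def HeightsOK (B : Board G) : Prop := ∀ s ∈ B, s ≠ [] ∧ s.length ≤ 2

/-- A blocked cycle: distinct groups `p 0, …, p k`, each with exactly two
remaining tiles, such that for each `i` there is a height-two stack with a
`p (i+1)`-tile (cyclically) on top of a `p i`-tile. -/
def BlockedCycle (B : Board G) {k : ℕ} (p : Fin (k + 1) → G) : Prop :=
  Function.Injective p ∧ (∀ i, tileCount B (p i) = 2) ∧
    ∀ i, [p (i + 1), p i] ∈ B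

/-- The board contains some blocked cycle. -/
def HasBlockedCycle (B : Board G) : Prop :=
  ∃ (k : ℕ) (p : Fin (k + 1) → G), BlockedCycle B p

def cleanF (g : G) (s : List G) : List G := if s.head? = some g then s.tail else s

/-- Remove all (playable) `g`-tiles from the board, dropping emptied stacks. -/
def clean (g : G) (B : Board G) : Board G :=
  Multiset.filter (fun s => s ≠ []) (B.map (cleanF g))

lemma tileCount_cons (s : List G) (B : Board G) (g : G) :
    tileCount (s ::ₘ B) g = s.count g + tileCount B g := by
  simp [tileCount]

lemma tileCount_filter_ne (B : Board G) (g : G) :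
    tileCount (Multiset.filter (fun s => s ≠ []) B) g = tileCount B g := by
  induction B using Multiset.induction_on with
  | empty => simp
  | cons s B ih =>
    by_cases hs : s = []
    · subst hs
      rw [Multiset.filter_cons_of_neg _ (by simp), tileCount_cons, ih]
      simp
    · rw [Multiset.filter_cons_of_pos _ (by simpa using hs), tileCount_cons,
        tileCount_cons, ih]

lemma clean_filter_ne (g : G) (X : Board G) :
    clean g (Multiset.filter (fun s => s ≠ []) X) = clean g X := by
  induction X using Multiset.induction_on with
  | empty => simp
  | cons s X ih =>
    by_cases hs : s = []
    · subst hs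
      rw [Multiset.filter_cons_of_neg _ (by simp)]
      unfold clean at *
      rw [Multiset.map_cons, Multiset.filter_cons_of_neg _ (by simp [cleanF]), ih]
    · rw [Multiset.filter_cons_of_pos _ (by simpa using hs)]
      unfold clean at *
      rw [Multiset.map_cons, Multiset.map_cons, Multiset.filter_cons,
        Multiset.filter_cons, ih]

lemma cleanF_of_not_mem {g : G} {s : List G} (h : g ∉ s) : cleanF g s = s := by
  unfold cleanF
  rw [if_neg]
  intro hh
  cases s with
  | nil => simp at hh
  | cons a t =>
    simp at hh
    subst hh
    exact h List.mem_cons_self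

lemma cleanF_of_head {g : G} {s : List G} (h : s.head? = some g) :
    cleanF g s = s.tail := if_pos h

lemma count_eq_one_of_playable {g : G} {s : List G} (h1 : s.head? = some g)
    (h2 : g ∉ s.tail) : s.count g = 1 := by
  cases s with
  | nil => simp at h1
  | cons a t =>
    simp at h1
    subst h1
    simp only [List.tail_cons] at h2
    rw [List.count_cons_self, List.count_eq_zero.mpr h2]

lemma head_ne_nil {g : G} {s : List G} (h : s.head? = some g) : s ≠ [] := by
  cases s <;> simp_all

lemma not_mem_tail {g : G} {s : List G} (hg : g ∉ s) : g ∉ s.tail :=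
  fun h => hg (List.mem_of_mem_tail h)

lemma exists_mem_of_tileCount_ne_zero {B : Board G} {g : G}
    (h : tileCount B g ≠ 0) : ∃ s ∈ B, g ∈ s := by
  by_contra hc
  push_neg at hc
  apply h
  unfold tileCount
  apply Multiset.sum_eq_zero
  intro x hx
  obtain ⟨s, hs, rfl⟩ := Multiset.mem_map.mp hx
  exact List.count_eq_zero.mpr (hc s hs)

lemma map_cleanF_of_tileCount_zero {g : G} {B : Board G}
    (h : tileCount B g = 0) : Multiset.map (cleanF g) B = B := by
  rw [Multiset.map_congr rfl (fun s hs => cleanF_of_not_mem ?_), Multiset.map_id']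
  intro hg
  have : s.count g ≠ 0 := by simpa [List.count_eq_zero] using hg
  apply this
  have := Multiset.sum_eq_zero_iff.mp h (s.count g)
    (Multiset.mem_map.mpr ⟨s, hs, rfl⟩)
  exact this

/-- Effect of playing a pair of `g`-tiles. -/
lemma playg {B : Board G} {g : G} {s₁ s₂ : List G} {rest : Board G}
    (hB : B = s₁ ::ₘ s₂ ::ₘ rest)
    (h1 : s₁.head? = some g) (h2 : s₂.head? = some g)
    (hplay : ∀ s ∈ B, g ∈ s → s.head? = some g ∧ g ∉ s.tail) :
    tileCount (play s₁ s₂ rest) g = tileCount B g - 2 ∧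
    (∀ s ∈ play s₁ s₂ rest, g ∈ s → s.head? = some g ∧ g ∉ s.tail) ∧
    clean g (play s₁ s₂ rest) = clean g B ∧
    (tileCount B g = 2 → play s₁ s₂ rest = clean g B) := by
  have hm1 : s₁ ∈ B := by rw [hB]; exact Multiset.mem_cons_self _ _
  have hm2 : s₂ ∈ B := by rw [hB]; exact Multiset.mem_cons_of_mem (Multiset.mem_cons_self _ _)
  have hg1 : g ∈ s₁ := by cases s₁ <;> simp_all
  have hg2 : g ∈ s₂ := by cases s₂ <;> simp_all
  have ht1 : g ∉ s₁.tail := (hplay s₁ hm1 hg1).2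
  have ht2 : g ∉ s₂.tail := (hplay s₂ hm2 hg2).2
  have hc1 : s₁.count g = 1 := count_eq_one_of_playable h1 ht1
  have hc2 : s₂.count g = 1 := count_eq_one_of_playable h2 ht2
  have hct1 : s₁.tail.count g = 0 := List.count_eq_zero.mpr ht1
  have hct2 : s₂.tail.count g = 0 := List.count_eq_zero.mpr ht2
  have hcB : tileCount B g = 2 + tileCount rest g := by
    rw [hB, tileCount_cons, tileCount_cons, hc1, hc2]; omega
  have hcount : tileCount (play s₁ s₂ rest) g = tileCount B g - 2 := by
    unfold play
    rw [tileCount_filter_ne, tileCount_cons, tileCount_cons, hct1, hct2, hcB]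
    simp
  refine ⟨hcount, ?_, ?_, ?_⟩
  · intro s hs hgs
    unfold play at hs
    rw [Multiset.mem_filter] at hs
    rcases Multiset.mem_cons.mp hs.1 with h | h
    · exact absurd (h ▸ hgs) ht1
    rcases Multiset.mem_cons.mp h with h | h
    · exact absurd (h ▸ hgs) ht2
    · have hsB : s ∈ B := by
        rw [hB]; exact Multiset.mem_cons_of_mem (Multiset.mem_cons_of_mem h)
      exact hplay s hsB hgs
  · unfold play
    rw [clean_filter_ne]
    unfold clean
    rw [hB, Multiset.map_cons, Multiset.map_cons, Multiset.map_cons,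
      Multiset.map_cons, cleanF_of_not_mem ht1, cleanF_of_not_mem ht2,
      cleanF_of_head h1, cleanF_of_head h2]
  · intro h2c
    have hrest : tileCount rest g = 0 := by omega
    unfold play clean
    rw [hB, Multiset.map_cons, Multiset.map_cons, cleanF_of_head h1,
      cleanF_of_head h2, map_cleanF_of_tileCount_zero hrest]

/-- If there are at least two `g`-tiles, we can play a pair of them. -/
lemma step {B : Board G} {g : G} (h2 : 2 ≤ tileCount B g)
    (hplay : ∀ s ∈ B, g ∈ s → s.head? = some g ∧ g ∉ s.tail) :
    ∃ B₁, Move B B₁ ∧ tileCount B₁ g = tileCount B g - 2 ∧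
      (∀ s ∈ B₁, g ∈ s → s.head? = some g ∧ g ∉ s.tail) ∧
      clean g B₁ = clean g B ∧ (tileCount B g = 2 → B₁ = clean g B) := by
  obtain ⟨s₁, hs₁, hg1⟩ := exists_mem_of_tileCount_ne_zero (g := g) (B := B) (by omega)
  obtain ⟨B₂, rfl⟩ := Multiset.exists_cons_of_mem hs₁
  have hh1 := hplay s₁ (Multiset.mem_cons_self _ _) hg1
  have hc1 : s₁.count g = 1 := count_eq_one_of_playable hh1.1 hh1.2
  have hcB2 : tileCount B₂ g ≠ 0 := by
    rw [tileCount_cons, hc1] at h2; omega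
  obtain ⟨s₂, hs₂, hg2⟩ := exists_mem_of_tileCount_ne_zero hcB2
  obtain ⟨rest, rfl⟩ := Multiset.exists_cons_of_mem hs₂
  have hh2 := hplay s₂ (Multiset.mem_cons_of_mem (Multiset.mem_cons_self _ _)) hg2
  obtain ⟨ha, hb, hc, hd⟩ := playg rfl hh1.1 hh2.1 hplay
  exact ⟨play s₁ s₂ rest, ⟨g, s₁, s₂, rest, rfl, hh1.1, hh2.1, rfl⟩, ha, hb, hc, hd⟩

lemma filter_ne_cons_cons_filter (x y : List G) (M : Board G) :
    Multiset.filter (fun s => s ≠ []) (x ::ₘ y ::ₘ Multiset.filter (fun s => s ≠ []) M) =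
    Multiset.filter (fun s => s ≠ []) (x ::ₘ y ::ₘ M) := by
  rw [Multiset.filter_cons, Multiset.filter_cons, Multiset.filter_cons,
    Multiset.filter_cons, Multiset.filter_filter]
  congr 1
  congr 1
  exact Multiset.filter_congr (fun a _ => by simp)

/-- Effect of playing a pair of `h`-tiles with `h ≠ g` on the cleaned board. -/
lemma playne {B : Board G} {g h : G} (hne : h ≠ g) {s₁ s₂ : List G} {rest : Board G}
    (hB : B = s₁ ::ₘ s₂ ::ₘ rest)
    (h1 : s₁.head? = some h) (h2 : s₂.head? = some h)
    (hplay : ∀ s ∈ B, g ∈ s → s.head? = some g ∧ g ∉ s.tail) :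
    Move (clean g B) (clean g (play s₁ s₂ rest)) ∧
    tileCount (play s₁ s₂ rest) g = tileCount B g ∧
    (∀ s ∈ play s₁ s₂ rest, g ∈ s → s.head? = some g ∧ g ∉ s.tail) := by
  have hm1 : s₁ ∈ B := by rw [hB]; exact Multiset.mem_cons_self _ _
  have hm2 : s₂ ∈ B := by rw [hB]; exact Multiset.mem_cons_of_mem (Multiset.mem_cons_self _ _)
  have hg1 : g ∉ s₁ := fun hg => hne (by
    have := (hplay s₁ hm1 hg).1; rw [h1] at this; exact (Option.some_injective _ this))
  have hg2 : g ∉ s₂ := fun hg => hne (by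
    have := (hplay s₂ hm2 hg).1; rw [h2] at this; exact (Option.some_injective _ this))
  have ht1 : g ∉ s₁.tail := not_mem_tail hg1
  have ht2 : g ∉ s₂.tail := not_mem_tail hg2
  have hcleanB : clean g B = s₁ ::ₘ s₂ ::ₘ clean g rest := by
    unfold clean
    rw [hB, Multiset.map_cons, Multiset.map_cons, cleanF_of_not_mem hg1,
      cleanF_of_not_mem hg2,
      Multiset.filter_cons_of_pos _ (by simpa using head_ne_nil h1),
      Multiset.filter_cons_of_pos _ (by simpa using head_ne_nil h2)]
  have hcleanB₁ : clean g (play s₁ s₂ rest) = play s₁ s₂ (clean g rest) := by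
    unfold play
    rw [clean_filter_ne]
    unfold clean
    rw [Multiset.map_cons, Multiset.map_cons, cleanF_of_not_mem ht1,
      cleanF_of_not_mem ht2, filter_ne_cons_cons_filter]
  refine ⟨⟨h, s₁, s₂, clean g rest, hcleanB, h1, h2, hcleanB₁⟩, ?_, ?_⟩
  · unfold play
    rw [tileCount_filter_ne, tileCount_cons, tileCount_cons,
      List.count_eq_zero.mpr ht1, List.count_eq_zero.mpr ht2, hB,
      tileCount_cons, tileCount_cons, List.count_eq_zero.mpr hg1,
      List.count_eq_zero.mpr hg2]
  · intro s hs hgs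
    unfold play at hs
    rw [Multiset.mem_filter] at hs
    rcases Multiset.mem_cons.mp hs.1 with h | h
    · exact absurd (h ▸ hgs) ht1
    rcases Multiset.mem_cons.mp h with h | h
    · exact absurd (h ▸ hgs) ht2
    · have hsB : s ∈ B := by
        rw [hB]; exact Multiset.mem_cons_of_mem (Multiset.mem_cons_of_mem h)
      exact hplay s hsB hgs

/-- Forward direction. -/
lemma solvable_clean {B : Board G} {g : G} (hsolv : Solvable B)
    (hcount : tileCount B g = 2 ∨ tileCount B g = 4)
    (hplay : ∀ s ∈ B, g ∈ s → s.head? = some g ∧ g ∉ s.tail) :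
    Solvable (clean g B) := by
  revert hcount hplay
  induction hsolv using Relation.ReflTransGen.head_induction_on with
  | refl => intro hcount _; simp [tileCount] at hcount
  | head hmove htail ih =>
    intro hcount hplay
    rename_i B B₁ _
    obtain ⟨h, s₁, s₂, rest, hB, h1, h2, hB₁⟩ := hmove
    by_cases hhg : h = g
    · subst hhg
      obtain ⟨ha, hb, hc, hd⟩ := playg hB h1 h2 hplay
      rcases hcount with h2c | h4c
      · rw [← hd h2c, ← hB₁]
        exact htail
      · rw [← hc, ← hB₁] at *
        exact ih (Or.inl (by rw [hB₁, ha, h4c])) (hB₁ ▸ hb)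
    · obtain ⟨hmv, hcnt, hpl⟩ := playne hhg hB h1 h2 hplay
      rw [← hB₁] at hmv hcnt hpl
      exact Relation.ReflTransGen.head hmv (ih (by omega) hpl)

/-- cleaning soundness: if all remaining tiles (two or four) of a
group `g` are simultaneously playable, then the board is solvable iff the board
obtained by removing all tiles of `g` is solvable. -/
theorem stmt13 (B : Board G) (g : G)
    (hcount : tileCount B g = 2 ∨ tileCount B g = 4)
    (hplay : ∀ s ∈ B, g ∈ s → s.head? = some g ∧ g ∉ s.tail) :
    Solvable B ↔ Solvable (Multiset.filter (fun s => s ≠ [])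
      (B.map (fun s => if s.head? = some g then s.tail else s))) := by
  have hrw : Multiset.filter (fun s => s ≠ [])
      (B.map (fun s => if s.head? = some g then s.tail else s)) = clean g B := rfl
  rw [hrw]
  constructor
  · intro hs
    exact solvable_clean hs hcount hplay
  · intro hs
    rcases hcount with h2c | h4c
    · obtain ⟨B₁, hmv, _, _, _, hd⟩ := step (g := g) (by omega) hplay
      rw [hd h2c] at hmv
      exact Relation.ReflTransGen.head hmv hs
    · obtain ⟨B₁, hmv, ha, hb, hc, _⟩ := step (g := g) (by omega) hplay
      obtain ⟨B₂, hmv2, _, _, _, hd2⟩ := step (g := g) (B := B₁) (by omega) hb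
      rw [hd2 (by omega), hc] at hmv2
      exact Relation.ReflTransGen.head hmv (Relation.ReflTransGen.head hmv2 hs)
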